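/- arXiv:2604.02588 — 6 statements merged into one kernel-verified Lean document; each statement's English description precedes it below -/
import Mathlib

section
/- Let X be a Banach lattice, (x_n) a sequence in X and x ∈ X. Then (x_n) converges uniformly to x if and only if for every ε > 0 there exists k such that for all m ≥ k one has ‖⋁_{n=k}^m |x_n − x|‖ < ε. -/
/-- A sequence `(x n)` in a Banach lattice converges uniformly to `l` if there is a `z`
such that for every `m ≥ 1`, `|x n - l| ≤ z / m` for all but finitely many `n`. -/
def UnifConvergesTo {X : Type*} [NormedAddCommGroup X] [Lattice X] [IsOrderedAddMonoid X]
    [HasSolidNorm X] [NormedSpace ℝ X]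
    (x : ℕ → X) (l : X) : Prop :=
  ∃ z : X, ∀ m : ℕ, 1 ≤ m → ∀ᶠ n in Filter.atTop, |x n - l| ≤ (m : ℝ)⁻¹ • z

theorem stmt0 {X : Type*} [NormedAddCommGroup X] [Lattice X] [IsOrderedAddMonoid X]
    [HasSolidNorm X] [NormedSpace ℝ X] [CompleteSpace X]
    [PosSMulStrictMono ℝ X] (x : ℕ → X) (l : X) :
    UnifConvergesTo x l ↔
      ∀ ε : ℝ, 0 < ε → ∃ k : ℕ, ∀ m : ℕ, ∀ h : k ≤ m,
        ‖(Finset.Icc k m).sup' (Finset.nonempty_Icc.2 h) (fun n => |x n - l|)‖ < ε := by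
  set g : ℕ → X := fun n => |x n - l| with hg
  have hg0 : ∀ n, 0 ≤ g n := fun n => abs_nonneg _
  constructor
  · rintro ⟨z, hz⟩ ε hε
    obtain ⟨n0, hn0⟩ := (hz 1 le_rfl).exists
    have hz0 : 0 ≤ z := by
      have := (hg0 n0).trans hn0
      simpa using this
    obtain ⟨M, hM⟩ := exists_nat_gt (‖z‖ / ε)
    set M' : ℕ := max M 1 with hM'def
    have hM1 : 1 ≤ M' := le_max_right _ _
    have hMpos : (0 : ℝ) < (M' : ℝ) := by exact_mod_cast hM1.trans_lt' Nat.zero_lt_one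
    obtain ⟨N, hN⟩ := Filter.eventually_atTop.mp (hz M' hM1)
    refine ⟨N, fun m hm => ?_⟩
    have hsup_le : (Finset.Icc N m).sup' (Finset.nonempty_Icc.2 hm) g ≤ (M' : ℝ)⁻¹ • z :=
      Finset.sup'_le _ _ fun n hn => hN n (Finset.mem_Icc.mp hn).1
    have hsup_nonneg : 0 ≤ (Finset.Icc N m).sup' (Finset.nonempty_Icc.2 hm) g :=
      (hg0 N).trans (Finset.le_sup' g (Finset.mem_Icc.mpr ⟨le_rfl, hm⟩))
    have hnorm : ‖(Finset.Icc N m).sup' (Finset.nonempty_Icc.2 hm) g‖ ≤ ‖(M' : ℝ)⁻¹ • z‖ := by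
      refine norm_le_norm_of_abs_le_abs ?_
      rw [abs_of_nonneg hsup_nonneg, abs_of_nonneg (smul_nonneg (by positivity) hz0)]
      exact hsup_le
    refine hnorm.trans_lt ?_
    rw [norm_smul, Real.norm_eq_abs, abs_of_nonneg (by positivity : (0:ℝ) ≤ (M':ℝ)⁻¹)]
    rw [inv_mul_lt_iff₀ hMpos]
    rw [div_lt_iff₀ hε] at hM
    calc ‖z‖ < M * ε := hM
      _ ≤ M' * ε := by
          have : (M : ℝ) ≤ (M' : ℝ) := by exact_mod_cast le_max_left M 1
          nlinarith
  · intro h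
    choose f hf using fun j : ℕ => h ((1 / 2 : ℝ) ^ j) (by positivity)
    -- a strictly increasing sequence of indices
    let K : ℕ → ℕ := fun j => (Finset.range (j + 1)).sup f + j
    have hKlt : ∀ j, K j < K (j + 1) := by
      intro j
      have : (Finset.range (j + 1)).sup f ≤ (Finset.range (j + 1 + 1)).sup f :=
        Finset.sup_mono (Finset.range_subset_range.mpr (by omega))
      simp only [K]
      omega
    have hKf : ∀ j, f j ≤ K j := fun j =>
      le_trans (Finset.le_sup (Finset.mem_range.mpr (Nat.lt_succ_self j))) (Nat.le_add_right _ _)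
    have hKmono : StrictMono K := strictMono_nat_of_lt_succ hKlt
    -- the partial suprema
    set S : ℕ → X := fun j =>
      (Finset.Icc (K j) (K (j + 1))).sup' (Finset.nonempty_Icc.2 (hKlt j).le) g with hS
    have hSnonneg : ∀ j, 0 ≤ S j := fun j =>
      (hg0 (K j)).trans (Finset.le_sup' g (Finset.mem_Icc.mpr ⟨le_rfl, (hKlt j).le⟩))
    have hSnorm : ∀ j, ‖S j‖ ≤ (1 / 2 : ℝ) ^ j := by
      intro j
      have hfm : f j ≤ K (j + 1) := (hKf j).trans (hKlt j).le
      have hsub : S j ≤ (Finset.Icc (f j) (K (j + 1))).sup' (Finset.nonempty_Icc.2 hfm) g :=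
        Finset.sup'_le _ _ fun n hn => by
          refine Finset.le_sup' g (Finset.mem_Icc.mpr ?_)
          have := Finset.mem_Icc.mp hn
          exact ⟨(hKf j).trans this.1, this.2⟩
      have hbig : 0 ≤ (Finset.Icc (f j) (K (j + 1))).sup' (Finset.nonempty_Icc.2 hfm) g :=
        (hg0 (f j)).trans (Finset.le_sup' g (Finset.mem_Icc.mpr ⟨le_rfl, hfm⟩))
      have : ‖S j‖ ≤ ‖(Finset.Icc (f j) (K (j + 1))).sup' (Finset.nonempty_Icc.2 hfm) g‖ := by
        refine norm_le_norm_of_abs_le_abs ?_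
        rw [abs_of_nonneg (hSnonneg j), abs_of_nonneg hbig]
        exact hsub
      exact this.trans (hf j (K (j + 1)) hfm).le
    -- summability
    have hsum : Summable fun j : ℕ => (j : ℝ) • S j := by
      have hgeom : Summable fun j : ℕ => (j : ℝ) ^ 1 * (1 / 2 : ℝ) ^ j :=
        summable_pow_mul_geometric_of_norm_lt_one 1 (by norm_num : ‖(1/2:ℝ)‖ < 1)
      refine Summable.of_norm_bounded (g := fun j : ℕ => (j : ℝ) * (1 / 2 : ℝ) ^ j) (by simpa using hgeom) fun j => ?_
      rw [norm_smul, Real.norm_natCast]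
      exact mul_le_mul_of_nonneg_left (hSnorm j) (Nat.cast_nonneg j)
    set z : X := ∑' j : ℕ, (j : ℝ) • S j with hzdef
    have hterm_nonneg : ∀ j : ℕ, 0 ≤ (j : ℝ) • S j := fun j =>
      smul_nonneg (Nat.cast_nonneg j) (hSnonneg j)
    have hz0 : 0 ≤ z := tsum_nonneg hterm_nonneg
    have hle : ∀ j : ℕ, (j : ℝ) • S j ≤ z := fun j =>
      Summable.le_tsum hsum j fun i _ => hterm_nonneg i
    refine ⟨z, fun m hm => ?_⟩
    rw [Filter.eventually_atTop]
    refine ⟨K m, fun n hn => ?_⟩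
    have hmn : m ≤ n := hKmono.le_apply.trans hn
    classical
    set j : ℕ := @Nat.findGreatest (fun j => K j ≤ n) (fun _ => Nat.decLe _ _) n with hjdef
    have hKj : K j ≤ n := Nat.findGreatest_spec (P := fun j => K j ≤ n) hmn hn
    have hjm : m ≤ j := Nat.le_findGreatest hmn hn
    have hj1 : 1 ≤ j := hm.trans hjm
    have hnK : n < K (j + 1) := by
      by_cases hc : j + 1 ≤ n
      · have := Nat.findGreatest_is_greatest (Nat.lt_succ_self j) hc
        exact Nat.lt_of_not_le (by simpa [hjdef] using this)
      · exact lt_of_lt_of_le (Nat.lt_of_not_le hc) hKmono.le_apply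
    have hx : g n ≤ S j := Finset.le_sup' g (Finset.mem_Icc.mpr ⟨hKj, hnK.le⟩)
    have hjne : (j : ℝ) ≠ 0 := Nat.cast_ne_zero.mpr (by omega)
    have hSle : S j ≤ (j : ℝ)⁻¹ • z := by
      have h1 : S j = (j : ℝ)⁻¹ • ((j : ℝ) • S j) := (inv_smul_smul₀ hjne _).symm
      rw [h1]
      exact smul_le_smul_of_nonneg_left (hle j) (by positivity)
    have hfinal : (j : ℝ)⁻¹ • z ≤ (m : ℝ)⁻¹ • z := by
      have hmpos : (0 : ℝ) < (m : ℝ) := by exact_mod_cast hm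
      have hij : (j : ℝ)⁻¹ ≤ (m : ℝ)⁻¹ := by
        apply inv_anti₀ hmpos
        exact_mod_cast hjm
      have := smul_nonneg (sub_nonneg.mpr hij) hz0
      rw [sub_smul] at this
      exact sub_nonneg.mp this
    calc |x n - l| = g n := rfl
      _ ≤ S j := hx
      _ ≤ (j : ℝ)⁻¹ • z := hSle
      _ ≤ (m : ℝ)⁻¹ • z := hfinal
end

section
/- Let X be a separable Banach lattice, (x_n) a sequence in X and x ∈ X. Then (x_n) order converges to x if and only if (x_n) σ-order converges to x. -/
/-- A sequence `(x n)` in a Banach lattice order converges to `l` if there exist a nonempty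
directed preorder `(I, r)` and an antitone net `(z i)` indexed by `I` whose range has `0` as its
greatest lower bound, such that for every `i`, `|x n - l| ≤ z i` for all but finitely many `n`. -/
def OrderConvergesTo {X : Type*} [NormedAddCommGroup X] [Lattice X] [IsOrderedAddMonoid X] [HasSolidNorm X] (x : ℕ → X) (l : X) : Prop :=
  ∃ (I : Type) (r : I → I → Prop),
    Nonempty I ∧ (∀ i, r i i) ∧ (∀ i j k, r i j → r j k → r i k) ∧
    (∀ i j, ∃ k, r i k ∧ r j k) ∧
    ∃ z : I → X, (∀ i j, r i j → z j ≤ z i) ∧ IsGLB (Set.range z) 0 ∧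
      ∀ i, ∀ᶠ n in Filter.atTop, |x n - l| ≤ z i

/-- A sequence `(x n)` in a Banach lattice σ-order converges to `l` if there exists a decreasing
sequence `z 0 ≥ z 1 ≥ … ≥ 0` whose range has `0` as its greatest lower bound, such that for every
`m`, `|x n - l| ≤ z m` for all but finitely many `n`. -/
def SigmaOrderConvergesTo {X : Type*} [NormedAddCommGroup X] [Lattice X] [IsOrderedAddMonoid X] [HasSolidNorm X] (x : ℕ → X) (l : X) : Prop :=
  ∃ z : ℕ → X, Antitone z ∧ (∀ m, 0 ≤ z m) ∧ IsGLB (Set.range z) 0 ∧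
    ∀ m, ∀ᶠ n in Filter.atTop, |x n - l| ≤ z m

theorem stmt2 {X : Type*} [NormedAddCommGroup X] [Lattice X] [IsOrderedAddMonoid X] [HasSolidNorm X] [NormedSpace ℝ X] [CompleteSpace X]
    [PosSMulStrictMono ℝ X] [PosSMulReflectLT ℝ X] [TopologicalSpace.SeparableSpace X] (x : ℕ → X) (l : X) :
    OrderConvergesTo x l ↔ SigmaOrderConvergesTo x l := by
  constructor
  · rintro ⟨I, r, ⟨i0⟩, hrefl, htrans, hdir, z, hanti, hglb, hev⟩
    -- a countable dense subset of the range of z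
    obtain ⟨S, hSsub, hScount, hSdense⟩ :=
      (TopologicalSpace.IsSeparable.of_separableSpace (Set.range z)).exists_countable_dense_subset
    -- enumerate indices whose values are dense in the range
    have hSne : S.Nonempty := by
      rcases (hSdense ⟨i0, rfl⟩) with h
      by_contra hS
      rw [Set.not_nonempty_iff_eq_empty] at hS
      simp [hS] at h
    obtain ⟨e, hesurj⟩ := (Set.countable_iff_exists_surjective hSne).1 hScount
    choose idx hidx using fun k => hSsub (e k).2
    -- directedness as a binary operation
    choose u hu1 hu2 using fun a b => hdir a b
    -- build an increasing chain j k dominating idx k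
    let j : ℕ → I := fun k => Nat.rec (idx 0) (fun k jk => u jk (idx (k + 1))) k
    have hj0 : ∀ k, r (j k) (j (k + 1)) := fun k => hu1 _ _
    have hjidx : ∀ k, r (idx k) (j k) := by
      intro k
      cases k with
      | zero => exact hrefl _
      | succ k => exact hu2 _ _
    set w : ℕ → X := fun k => z (j k) with hw
    have hwanti : Antitone w := antitone_nat_of_succ_le fun k => hanti _ _ (hj0 k)
    have hwpos : ∀ m, 0 ≤ w m := fun m => hglb.1 ⟨j m, rfl⟩
    refine ⟨w, hwanti, hwpos, ⟨fun y hy => ?_, fun c hc => ?_⟩, fun m => hev (j m)⟩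
    · obtain ⟨m, rfl⟩ := hy; exact hwpos m
    · -- c is a lower bound of range w; show c ≤ 0
      -- c ≤ z (idx k) for all k, hence c ≤ s for all s ∈ S
      have hcS : S ⊆ Set.Ici c := by
        intro s hs
        obtain ⟨k, hk⟩ := hesurj ⟨s, hs⟩
        have h1 : c ≤ w k := hc ⟨k, rfl⟩
        have h2 : w k ≤ z (idx k) := hanti _ _ (hjidx k)
        have : (e k : X) = s := by rw [hk]
        rw [← this, ← hidx k]
        exact h1.trans h2
      -- hence c is a lower bound of range z by closedness of Ici c
      have hcz : c ∈ lowerBounds (Set.range z) := by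
        intro y hy
        have : y ∈ closure (Set.Ici c) :=
          closure_mono hcS (hSdense hy)
        rwa [IsClosed.closure_eq isClosed_Ici] at this
      exact hglb.2 hcz
  · rintro ⟨z, hanti, hpos, hglb, hev⟩
    exact ⟨ℕ, (· ≤ ·), ⟨0⟩, le_refl, fun _ _ _ => le_trans, fun i j =>
      ⟨max i j, le_max_left _ _, le_max_right _ _⟩, z, fun i j h => hanti h, hglb, hev⟩
end

section
/- Let X be a separable Banach lattice. Then the complement in X^ℕ of the set X_{↓0} = {(x_n) ∈ X^ℕ : x_1 ≥ x_2 ≥ … ≥ 0 and inf_n x_n = 0} is an analytic subset of X^ℕ (with the product topology); equivalently, X_{↓0} is coanalytic. -/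
open MeasureTheory

/-- The set of decreasing positive sequences in `X` whose range has `0` as greatest lower
bound. -/
def XDownZero (X : Type*) [NormedAddCommGroup X] [Lattice X] [HasSolidNorm X]
    [IsOrderedAddMonoid X] : Set (ℕ → X) :=
  {z | Antitone z ∧ (∀ n, 0 ≤ z n) ∧ IsGLB (Set.range z) 0}

theorem stmt4 {X : Type*} [NormedAddCommGroup X] [Lattice X] [HasSolidNorm X]
    [IsOrderedAddMonoid X] [NormedSpace ℝ X] [CompleteSpace X]
    [PosSMulStrictMono ℝ X] [PosSMulReflectLT ℝ X] [TopologicalSpace.SeparableSpace X] :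
    MeasureTheory.AnalyticSet ((XDownZero X)ᶜ) := by
  borelize X
  have hA : IsClosed {z : ℕ → X | Antitone z} := by
    have h : {z : ℕ → X | Antitone z} = ⋂ (m) (n) (_ : m ≤ n), {z : ℕ → X | z n ≤ z m} := by
      ext z; simp [Antitone]
    rw [h]
    exact isClosed_iInter fun m => isClosed_iInter fun n => isClosed_iInter fun _ =>
      isClosed_le (continuous_apply n) (continuous_apply m)
  have hB : IsClosed {z : ℕ → X | ∀ n, (0 : X) ≤ z n} := by
    have h : {z : ℕ → X | ∀ n, (0 : X) ≤ z n} = ⋂ n, {z : ℕ → X | (0 : X) ≤ z n} := by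
      ext z; simp
    rw [h]
    exact isClosed_iInter fun n => isClosed_le continuous_const (continuous_apply n)
  set T : Set (X × (ℕ → X)) := {p | (∀ n, p.1 ≤ p.2 n) ∧ ¬ p.1 ≤ 0} with hT
  have hTmeas : MeasurableSet T := by
    have h1 : IsClosed {p : X × (ℕ → X) | ∀ n, p.1 ≤ p.2 n} := by
      have h : {p : X × (ℕ → X) | ∀ n, p.1 ≤ p.2 n} =
          ⋂ n, {p : X × (ℕ → X) | p.1 ≤ p.2 n} := by ext p; simp
      rw [h]
      exact isClosed_iInter fun n =>
        isClosed_le continuous_fst ((continuous_apply n).comp continuous_snd)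
    have h2 : IsOpen {p : X × (ℕ → X) | ¬ p.1 ≤ 0} := by
      have hc : IsClosed {p : X × (ℕ → X) | p.1 ≤ 0} :=
        isClosed_le continuous_fst continuous_const
      exact hc.isOpen_compl
    exact (h1.measurableSet).inter (h2.measurableSet)
  have hTan : MeasureTheory.AnalyticSet T := hTmeas.analyticSet
  have hproj : MeasureTheory.AnalyticSet (Prod.snd '' T) :=
    hTan.image_of_continuous continuous_snd
  have hset : (XDownZero X)ᶜ =
      ({z : ℕ → X | Antitone z}ᶜ ∪ {z : ℕ → X | ∀ n, (0 : X) ≤ z n}ᶜ) ∪ Prod.snd '' T := by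
    ext z
    simp only [XDownZero, Set.mem_compl_iff, Set.mem_setOf_eq, Set.mem_union, Set.mem_image,
      hT, Prod.exists]
    constructor
    · intro h
      by_cases ha : Antitone z
      · by_cases hb : ∀ n, (0 : X) ≤ z n
        · right
          have hlb : (0 : X) ∈ lowerBounds (Set.range z) := by
            rintro x ⟨n, rfl⟩; exact hb n
          have h2 : ¬ ∀ b, (∀ n, b ≤ z n) → b ≤ 0 := by
            intro hg
            exact h ⟨ha, hb, hlb, fun b hbmem => hg b fun n => hbmem (Set.mem_range_self n)⟩
          push_neg at h2
          obtain ⟨b, hb1, hb2⟩ := h2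
          exact ⟨b, z, ⟨hb1, hb2⟩, rfl⟩
        · left; right; exact hb
      · left; left; exact ha
    · rintro ((h | h) | ⟨b, w, ⟨h1, h2⟩, rfl⟩)
      · intro hc; exact h hc.1
      · intro hc; exact h hc.2.1
      · rintro ⟨-, -, hglb⟩
        exact h2 (hglb.2 fun x ⟨n, hn⟩ => hn ▸ h1 n)
  rw [hset]
  have hAB : MeasureTheory.AnalyticSet
      ({z : ℕ → X | Antitone z}ᶜ ∪ {z : ℕ → X | ∀ n, (0 : X) ≤ z n}ᶜ) :=
    ((hA.isOpen_compl.measurableSet).union (hB.isOpen_compl.measurableSet)).analyticSet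
  have key := MeasureTheory.AnalyticSet.iUnion (s := fun b : Bool => if b then
      ({z : ℕ → X | Antitone z}ᶜ ∪ {z : ℕ → X | ∀ n, (0 : X) ≤ z n}ᶜ) else Prod.snd '' T)
    (by rintro (_ | _)
        · simpa using hproj
        · simpa using hAB)
  have heq : (⋃ b : Bool, (fun b : Bool => if b then
      ({z : ℕ → X | Antitone z}ᶜ ∪ {z : ℕ → X | ∀ n, (0 : X) ≤ z n}ᶜ) else Prod.snd '' T) b) =
      ({z : ℕ → X | Antitone z}ᶜ ∪ {z : ℕ → X | ∀ n, (0 : X) ≤ z n}ᶜ) ∪ Prod.snd '' T := by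
    ext x
    simp only [Set.mem_iUnion, Bool.exists_bool, if_true, if_false, Set.mem_union]
    tauto
  rw [heq] at key
  exact key
end

section
/- Let X be a separable Banach lattice with a countable π-basis. Then the set X_{↓0} = {(x_n) ∈ X^ℕ : x_1 ≥ x_2 ≥ … ≥ 0 and inf_n x_n = 0} is a Borel subset of X^ℕ (with the product topology). -/
open MeasureTheory

theorem stmt10 {X : Type*} [NormedAddCommGroup X] [Lattice X] [HasSolidNorm X]
    [IsOrderedAddMonoid X] [NormedSpace ℝ X] [CompleteSpace X]
    [PosSMulStrictMono ℝ X] [TopologicalSpace.SeparableSpace X]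
    (b : ℕ → X) (hbpos : ∀ m, 0 < b m) (hbasis : ∀ x : X, 0 < x → ∃ m, b m < x) :
    MeasurableSet[borel (ℕ → X)] (XDownZero X) := by
  have hset : XDownZero X =
      (⋂ n, {z : ℕ → X | z (n+1) ≤ z n}) ∩
      ((⋂ n, {z : ℕ → X | 0 ≤ z n}) ∩
        ⋂ m, ⋃ n, {z : ℕ → X | b m ≤ z n}ᶜ) := by
    ext z
    simp only [XDownZero, Set.mem_setOf_eq, Set.mem_inter_iff, Set.mem_iInter,
      Set.mem_iUnion, Set.mem_compl_iff]
    constructor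
    · rintro ⟨ha, hp, hg⟩
      refine ⟨fun n => ha (Nat.le_succ n), hp, fun m => ?_⟩
      by_contra h
      push_neg at h
      have hlb : b m ∈ lowerBounds (Set.range z) := by
        rintro x ⟨n, rfl⟩; exact h n
      exact absurd (hg.2 hlb) ((hbpos m).not_ge)
    · rintro ⟨ha, hp, hg⟩
      refine ⟨antitone_nat_of_succ_le ha, hp, ⟨?_, ?_⟩⟩
      · rintro x ⟨n, rfl⟩; exact hp n
      · intro y hy
        by_contra hy0
        have hpos : 0 < y ⊔ 0 :=
          lt_of_le_of_ne le_sup_right (fun h => hy0 (sup_eq_right.mp h.symm))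
        obtain ⟨m, hm⟩ := hbasis _ hpos
        obtain ⟨n, hn⟩ := hg m
        exact hn (hm.le.trans (sup_le (hy ⟨n, rfl⟩) (hp n)))
  letI : MeasurableSpace (ℕ → X) := borel (ℕ → X)
  haveI : BorelSpace (ℕ → X) := ⟨rfl⟩
  rw [hset]
  refine (MeasurableSet.iInter fun n => ?_).inter
    ((MeasurableSet.iInter fun n => ?_).inter
      (MeasurableSet.iInter fun m => MeasurableSet.iUnion fun n => ?_))
  · exact (isClosed_le (continuous_apply (n+1)) (continuous_apply n)).measurableSet
  · exact (isClosed_le continuous_const (continuous_apply n)).measurableSet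
  · exact (isClosed_le continuous_const (continuous_apply n)).measurableSet.compl
end

section
/- Let X be a Banach lattice, let P be a countable subset of {x ∈ X : x > 0} that is norm-dense in {x ∈ X : x > 0}, and let (z_n) be a sequence in X with z_1 ≥ z_2 ≥ … ≥ 0. Then the following are equivalent: (1) 0 is the greatest lower bound of {z_n : n ∈ ℕ}; (2) there is no Ψ-branch for (z_n) with values in X; (3) there is no Ψ-branch for (z_n) with values in P. -/
/-- A Ψ-branch for the sequence `(z n)` is a sequence `(y i)` of strictly positive elements with
`‖(y i - z n)⁺‖ ≤ ‖y i‖ / 3 ^ (i + 1)` for all `i` and `n`, and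
`‖y (i+1) - y i‖ ≤ ‖y i‖ / 3 ^ (i + 1)` for all `i` (indices here start at `0`, so `y i`
corresponds to the paper's `y_{i+1}` and `3 ^ (i + 1)` to `3^i` there). -/
def PsiBranch {X : Type*} [NormedAddCommGroup X] [Lattice X] [HasSolidNorm X] [IsOrderedAddMonoid X] (z : ℕ → X) (y : ℕ → X) : Prop :=
  (∀ i, 0 < y i) ∧
  (∀ i n, ‖(y i - z n)⁺‖ ≤ ‖y i‖ / 3 ^ (i + 1)) ∧
  (∀ i, ‖y (i + 1) - y i‖ ≤ ‖y i‖ / 3 ^ (i + 1))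

lemma psi_norm_ub {X : Type*} [NormedAddCommGroup X] [Lattice X] [HasSolidNorm X] [IsOrderedAddMonoid X] {z y : ℕ → X}
    (hb : PsiBranch z y) (i : ℕ) : ‖y i‖ ≤ ‖y 0‖ * (2 - (1/3:ℝ)^i) := by
  obtain ⟨h1, h2, h3⟩ := hb
  induction i with
  | zero => norm_num
  | succ i ih =>
    have hpow : (0:ℝ) < (1/3:ℝ)^i := by positivity
    have hpow1 : (1/3:ℝ)^i ≤ 1 := pow_le_one₀ (by norm_num) (by norm_num)
    have h0 : (0:ℝ) ≤ ‖y 0‖ := norm_nonneg _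
    have key : ‖y (i+1)‖ ≤ ‖y i‖ + ‖y i‖ / 3 ^ (i+1) := by
      have := norm_sub_norm_le (y (i+1)) (y i)
      linarith [h3 i]
    have hni : (0:ℝ) ≤ ‖y i‖ := norm_nonneg _
    have hdiv : ‖y i‖ / 3 ^ (i+1) = ‖y i‖ * (1/3:ℝ)^i / 3 := by
      rw [pow_succ, one_div_pow]; ring
    rw [pow_succ]
    nlinarith [key, hdiv, mul_le_mul_of_nonneg_right ih hpow.le,
      mul_nonneg (mul_nonneg h0 hpow.le) hpow.le]

lemma psi_norm_lb {X : Type*} [NormedAddCommGroup X] [Lattice X] [HasSolidNorm X] [IsOrderedAddMonoid X] {z y : ℕ → X}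
    (hb : PsiBranch z y) (i : ℕ) : ‖y 0‖ * (1/2 + (1/3:ℝ)^i/2) ≤ ‖y i‖ := by
  obtain ⟨h1, h2, h3⟩ := hb
  induction i with
  | zero => norm_num
  | succ i ih =>
    have hpow : (0:ℝ) < (1/3:ℝ)^i := by positivity
    have hpow1 : (1/3:ℝ)^i ≤ 1 := pow_le_one₀ (by norm_num) (by norm_num)
    have h0 : (0:ℝ) ≤ ‖y 0‖ := norm_nonneg _
    have key : ‖y i‖ - ‖y i‖ / 3 ^ (i+1) ≤ ‖y (i+1)‖ := by
      have h := norm_sub_norm_le (y i) (y (i+1))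
      rw [norm_sub_rev] at h
      linarith [h3 i]
    have hni : (0:ℝ) ≤ ‖y i‖ := norm_nonneg _
    have hdiv : ‖y i‖ / 3 ^ (i+1) = ‖y i‖ * (1/3:ℝ)^i / 3 := by
      rw [pow_succ, one_div_pow]; ring
    rw [pow_succ]
    nlinarith [key, hdiv, mul_le_mul_of_nonneg_right ih hpow.le,
      mul_nonneg (mul_nonneg h0 hpow.le) hpow.le]

/-- A Ψ-branch implies `0` is not the infimum of the `z n`. -/
lemma psi_not_glb {X : Type*} [NormedAddCommGroup X] [Lattice X] [HasSolidNorm X] [IsOrderedAddMonoid X] [CompleteSpace X]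
    {z y : ℕ → X} (hb : PsiBranch z y) : ¬ IsGLB (Set.range z) 0 := by
  obtain ⟨h1, h2, h3⟩ := hb
  set b := ‖y 0‖ with hbdef
  have hb0 : 0 < b := norm_pos_iff.mpr (h1 0).ne'
  have hub : ∀ i, ‖y i‖ ≤ 2 * b := by
    intro i
    have h := psi_norm_ub ⟨h1, h2, h3⟩ i
    have hpow : (0:ℝ) < (1/3:ℝ)^i := by positivity
    nlinarith
  have hlb : ∀ i, b / 2 ≤ ‖y i‖ := by
    intro i
    have h := psi_norm_lb ⟨h1, h2, h3⟩ i
    have hpow : (0:ℝ) < (1/3:ℝ)^i := by positivity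
    nlinarith
  have hident : ∀ (c : ℝ) (i : ℕ), c / 3 ^ (i+1) = c / 3 * (1/3:ℝ)^i := by
    intro c i
    rw [pow_succ, one_div_pow]; ring
  -- Cauchy
  have hcauchy : CauchySeq y := by
    apply cauchySeq_of_le_geometric (1/3 : ℝ) (2*b/3) (by norm_num)
    intro n
    rw [dist_eq_norm, norm_sub_rev]
    calc ‖y (n+1) - y n‖ ≤ ‖y n‖ / 3 ^ (n+1) := h3 n
      _ ≤ (2*b) / 3 ^ (n+1) := by gcongr <;> first | positivity | exact hub n
      _ = 2*b/3 * (1/3:ℝ)^n := hident _ n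
  obtain ⟨w, hw⟩ := cauchySeq_tendsto_of_complete hcauchy
  have hw0 : (0:X) ≤ w := ge_of_tendsto hw (Filter.Eventually.of_forall fun i => (h1 i).le)
  have hwn : b / 2 ≤ ‖w‖ := ge_of_tendsto hw.norm (Filter.Eventually.of_forall hlb)
  have hwle : ∀ n, w ≤ z n := by
    intro n
    have ht : Filter.Tendsto (fun i => ‖(y i - z n)⁺‖) Filter.atTop (nhds ‖(w - z n)⁺‖) := by
      exact (((continuous_posPart.tendsto _).comp (hw.sub tendsto_const_nhds)).norm)
    have hg : Filter.Tendsto (fun i : ℕ => 2*b/3 * (1/3:ℝ)^i) Filter.atTop (nhds 0) := by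
      have := tendsto_pow_atTop_nhds_zero_of_lt_one (by norm_num : (0:ℝ) ≤ 1/3)
        (by norm_num : (1/3:ℝ) < 1)
      simpa using this.const_mul (2*b/3)
    have hle : ‖(w - z n)⁺‖ ≤ 0 := by
      refine le_of_tendsto_of_tendsto' ht hg fun i => ?_
      calc ‖(y i - z n)⁺‖ ≤ ‖y i‖ / 3 ^ (i+1) := h2 i n
        _ ≤ (2*b) / 3 ^ (i+1) := by gcongr <;> first | positivity | exact hub i
        _ = 2*b/3 * (1/3:ℝ)^i := hident _ i
    have : (w - z n)⁺ = 0 := by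
      rw [← norm_eq_zero]; exact le_antisymm hle (norm_nonneg _)
    exact sub_nonpos.mp (posPart_eq_zero.mp this)
  intro hglb
  have hwlb : w ∈ lowerBounds (Set.range z) := by
    rintro x ⟨n, rfl⟩; exact hwle n
  have : w ≤ 0 := hglb.2 hwlb
  have hweq : w = 0 := le_antisymm this hw0
  rw [hweq, norm_zero] at hwn
  linarith

/-- If `0` is not the infimum, we can find a Ψ-branch with values in `P`. -/
lemma psi_branch_exists {X : Type*} [NormedAddCommGroup X] [Lattice X] [HasSolidNorm X] [IsOrderedAddMonoid X]
    (P : Set X) (hPsub : P ⊆ {x : X | 0 < x}) (hPdense : {x : X | 0 < x} ⊆ closure P)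
    {z : ℕ → X} (hpos : ∀ n, 0 ≤ z n) (hn : ¬ IsGLB (Set.range z) 0) :
    ∃ y : ℕ → X, (∀ i, y i ∈ P) ∧ PsiBranch z y := by
  have h0lb : (0:X) ∈ lowerBounds (Set.range z) := by
    rintro x ⟨n, rfl⟩; exact hpos n
  obtain ⟨v, hv, hv0⟩ : ∃ v ∈ lowerBounds (Set.range z), ¬ v ≤ 0 := by
    by_contra hc
    push_neg at hc
    exact hn ⟨h0lb, fun v hv => hc v hv⟩
  obtain ⟨u, hu, hu_le⟩ : ∃ u : X, 0 < u ∧ ∀ n, u ≤ z n := by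
    refine ⟨v⁺, ?_, fun n => ?_⟩
    · refine lt_of_le_of_ne (posPart_nonneg v) (Ne.symm fun h => hv0 ?_)
      exact posPart_eq_zero.mp h
    · rw [posPart_def]
      exact sup_le (hv ⟨n, rfl⟩) (hpos n)
  clear hv0 hv h0lb hn
  have hun : 0 < ‖u‖ := norm_pos_iff.mpr hu.ne'
  have hch : ∀ i : ℕ, ∃ p ∈ P, ‖p - u‖ < ‖u‖ / (4 * 3 ^ (i+1)) := by
    intro i
    have hmem : u ∈ closure P := hPdense hu
    rw [Metric.mem_closure_iff] at hmem
    obtain ⟨p, hp, hd⟩ := hmem (‖u‖ / (4 * 3 ^ (i+1))) (by positivity)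
    exact ⟨p, hp, by rwa [dist_comm, dist_eq_norm] at hd⟩
  choose y hyP hyu using hch
  have hclose : ∀ i, ‖y i - u‖ ≤ ‖u‖ / (4 * 3 ^ (i+1)) := fun i => (hyu i).le
  have h3ge : ∀ i : ℕ, (3:ℝ) ≤ 3 ^ (i+1) := by
    intro i
    calc (3:ℝ) = 3 ^ 1 := (pow_one 3).symm
      _ ≤ 3 ^ (i+1) := by gcongr <;> [norm_num; omega]
  have hlb : ∀ i, ‖u‖ / 2 ≤ ‖y i‖ := by
    intro i
    have h := norm_sub_norm_le u (y i)
    rw [norm_sub_rev] at h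
    have h1 : ‖u‖ / (4 * 3 ^ (i+1)) ≤ ‖u‖ / 12 := by
      gcongr
      linarith [h3ge i]
    linarith [hclose i]
  refine ⟨y, hyP, fun i => hPsub (hyP i), fun i n => ?_, fun i => ?_⟩
  · -- second branch condition
    have hmono : (y i - z n)⁺ ≤ (y i - u)⁺ := by
      rw [posPart_def, posPart_def]
      exact sup_le_sup_right (sub_le_sub_left (hu_le n) _) 0
    have hn1 : ‖(y i - z n)⁺‖ ≤ ‖(y i - u)⁺‖ := by
      apply norm_le_norm_of_abs_le_abs
      rw [abs_of_nonneg (posPart_nonneg _), abs_of_nonneg (posPart_nonneg _)]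
      exact hmono
    have hn2 : ‖(y i - u)⁺‖ ≤ ‖y i - u‖ := by
      apply norm_le_norm_of_abs_le_abs
      rw [abs_of_nonneg (posPart_nonneg _)]
      exact sup_le (le_abs_self _) (abs_nonneg _)
    calc ‖(y i - z n)⁺‖ ≤ ‖y i - u‖ := hn1.trans hn2
      _ ≤ ‖u‖ / (4 * 3 ^ (i+1)) := hclose i
      _ = (‖u‖ / 4) / 3 ^ (i+1) := by ring
      _ ≤ ‖y i‖ / 3 ^ (i+1) := by
          gcongr <;> first | positivity | linarith [hlb i, hun]
  · -- third branch condition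
    have hsplit : y (i+1) - y i = (y (i+1) - u) - (y i - u) := by abel
    have e1 : ‖y (i+1) - u‖ ≤ ‖u‖ / (4 * 3 ^ (i+2)) := hclose (i+1)
    have e2 : ‖y i - u‖ ≤ ‖u‖ / (4 * 3 ^ (i+1)) := hclose i
    have h2' : ‖u‖ / (4 * 3 ^ (i+2)) ≤ ‖u‖ / (4 * 3 ^ (i+1)) := by
      gcongr <;> first | norm_num | omega
    calc ‖y (i+1) - y i‖ ≤ ‖y (i+1) - u‖ + ‖y i - u‖ := by
          rw [hsplit]; exact norm_sub_le _ _
      _ ≤ ‖u‖ / (4 * 3 ^ (i+1)) + ‖u‖ / (4 * 3 ^ (i+1)) := by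
          linarith [e1.trans h2', e2]
      _ = (‖u‖ / 2) / 3 ^ (i+1) := by ring
      _ ≤ ‖y i‖ / 3 ^ (i+1) := by
          gcongr <;> first | positivity | exact hlb i

theorem stmt12 {X : Type*} [NormedAddCommGroup X] [Lattice X] [HasSolidNorm X] [IsOrderedAddMonoid X] [NormedSpace ℝ X] [CompleteSpace X]
    [PosSMulStrictMono ℝ X] [PosSMulReflectLT ℝ X]
    (P : Set X) (hPsub : P ⊆ {x : X | 0 < x}) (hPcount : P.Countable)
    (hPdense : {x : X | 0 < x} ⊆ closure P)
    (z : ℕ → X) (hanti : Antitone z) (hpos : ∀ n, 0 ≤ z n) :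
    (IsGLB (Set.range z) 0 ↔ ¬∃ y : ℕ → X, PsiBranch z y) ∧
    (IsGLB (Set.range z) 0 ↔ ¬∃ y : ℕ → X, (∀ i, y i ∈ P) ∧ PsiBranch z y) := by
  constructor
  · constructor
    · rintro hglb ⟨y, hy⟩
      exact psi_not_glb hy hglb
    · intro hno
      by_contra hn
      obtain ⟨y, _, hb⟩ := psi_branch_exists P hPsub hPdense hpos hn
      exact hno ⟨y, hb⟩
  · constructor
    · rintro hglb ⟨y, _, hy⟩
      exact psi_not_glb hy hglb
    · intro hno
      by_contra hn
      obtain ⟨y, hyP, hb⟩ := psi_branch_exists P hPsub hPdense hpos hn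
      exact hno ⟨y, hyP, hb⟩
end

section
/- Let X be a Banach lattice with the Fatou property and let (z_n) be a sequence in X with z_1 ≥ z_2 ≥ … ≥ 0 such that 0 is the greatest lower bound of {z_n : n ∈ ℕ}. Then there is no y ∈ X with y > 0 such that ‖(y − z_n)⁺‖ ≤ ‖y‖/3 for all n. -/
theorem stmt18 {X : Type*} [NormedAddCommGroup X] [Lattice X] [IsOrderedAddMonoid X] [HasSolidNorm X] [NormedSpace ℝ X] [CompleteSpace X]
    [PosSMulStrictMono ℝ X]
    (hFatou : ∀ (x : ℕ → X) (l : X), Monotone x → (∀ n, 0 ≤ x n) → (∀ n, x n ≤ l) →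
      IsLUB (Set.range x) l → ‖l‖ = ⨆ n, ‖x n‖)
    (z : ℕ → X) (hanti : Antitone z) (hpos : ∀ n, 0 ≤ z n) (hglb : IsGLB (Set.range z) 0) :
    ¬∃ y : X, 0 < y ∧ ∀ n, ‖(y - z n)⁺‖ ≤ ‖y‖ / 3 := by
  rintro ⟨y, hy, hbound⟩
  set x : ℕ → X := fun n => y - (y ⊓ z n) with hx
  have hxeq : ∀ n, x n = (y - z n)⁺ := by
    intro n
    simp only [hx, sub_inf, sub_self, posPart_def, sup_comm]
  have hmono : Monotone x := by
    intro m n hmn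
    simp only [hx, sub_le_sub_iff_left]
    exact inf_le_inf_left y (hanti hmn)
  have hnonneg : ∀ n, 0 ≤ x n := fun n => sub_nonneg.2 inf_le_left
  have hle : ∀ n, x n ≤ y := fun n =>
    sub_le_self y (le_inf hy.le (hpos n))
  have hlub : IsLUB (Set.range x) y := by
    constructor
    · rintro _ ⟨n, rfl⟩; exact hle n
    · intro u hu
      have h1 : ∀ n, y - u ≤ z n := by
        intro n
        have := hu ⟨n, rfl⟩
        have : y - u ≤ y ⊓ z n := sub_le_comm.1 this
        exact this.trans inf_le_right
      have h2 : y - u ≤ 0 := hglb.2 (by rintro _ ⟨n, rfl⟩; exact h1 n)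
      exact sub_nonpos.1 h2
  have hnorm := hFatou x y hmono hnonneg hle hlub
  have hsup : (⨆ n, ‖x n‖) ≤ ‖y‖ / 3 := by
    apply ciSup_le
    intro n
    rw [hxeq n]
    exact hbound n
  have : ‖y‖ ≤ ‖y‖ / 3 := hnorm ▸ hsup
  have hny : ‖y‖ ≤ 0 := by linarith
  have : y = 0 := norm_le_zero_iff.1 hny
  exact hy.ne' this
end
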